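/- Let $s, y \in \mathbb{R}^n$ with $s^Ty > 0$ and $\gamma > 0$. Then $\alpha^{BB'}(\gamma) = 1 / \beta^{BB}(\gamma)$ where $\beta^{BB}(\gamma)$ is the minimizer over $\beta \in \mathbb{R}$ of $\beta \mapsto \frac{\|\beta s - y\|^2}{1/\gamma^2 + \beta^2}$, i.e., $\beta^{BB}(\gamma) = \frac{\|y\|^2 - \|s\|^2/\gamma^2 + \sqrt{(\|y\|^2 - \|s\|^2/\gamma^2)^2 + 4(s^Ty)^2/\gamma^2}}{2 s^T y}$, and this minimizer is positive. -/
import Mathlib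

theorem aux_stls (A B c g r b : ℝ) (hc : 0 < c) (hg : 0 < g)
    (hr : r = Real.sqrt ((B - A * g) ^ 2 + 4 * c ^ 2 * g))
    (hb : b = (B - A * g + r) / (2 * c)) :
    0 < b ∧
    (∀ β : ℝ, (A * b ^ 2 - 2 * c * b + B) / (g + b ^ 2)
        ≤ (A * β ^ 2 - 2 * c * β + B) / (g + β ^ 2)) ∧
    (∀ β : ℝ, (A * β ^ 2 - 2 * c * β + B) / (g + β ^ 2)
        = (A * b ^ 2 - 2 * c * b + B) / (g + b ^ 2) → β = b) ∧
    (2 * c) / (B - A * g + r) = 1 / b := by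
  have hD : 0 ≤ (B - A * g) ^ 2 + 4 * c ^ 2 * g := by positivity
  have hr0 : 0 ≤ r := hr ▸ Real.sqrt_nonneg _
  have hr2 : r ^ 2 = (B - A * g) ^ 2 + 4 * c ^ 2 * g := by rw [hr]; exact Real.sq_sqrt hD
  have hlt : (B - A * g) ^ 2 < r ^ 2 := by rw [hr2]; nlinarith [mul_pos (pow_pos hc 2) hg]
  have h1 : B - A * g < r := by nlinarith
  have h2 : A * g - B < r := by nlinarith
  set k := (A * g - B + r) / (2 * g) with hk
  have hk0 : 0 < k := div_pos (by linarith) (by linarith)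
  have hb0 : 0 < b := by rw [hb]; exact div_pos (by linarith) (by linarith)
  have e1 : k * b = c := by
    rw [hk, hb, div_mul_div_comm, div_eq_iff (by positivity : (2 * g) * (2 * c) ≠ 0)]
    linear_combination hr2
  have e2 : k * (2 * g) = A * g - B + r := by
    rw [hk]; exact div_mul_cancel₀ _ (by positivity)
  have e3 : b * (2 * c) = B - A * g + r := by
    rw [hb]; exact div_mul_cancel₀ _ (by positivity)
  have hid : ∀ β : ℝ, A * β ^ 2 - 2 * c * β + B
      = (A - k) * (g + β ^ 2) + k * (β - b) ^ 2 := by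
    intro β
    linear_combination 2 * β * e1 - b * e1 + e2 / 2 - e3 / 2
  have hdenb : (0:ℝ) < g + b ^ 2 := by positivity
  have hval : (A * b ^ 2 - 2 * c * b + B) / (g + b ^ 2) = A - k := by
    rw [hid b, sub_self, div_eq_iff hdenb.ne']
    ring
  refine ⟨hb0, ?_, ?_, ?_⟩
  · intro β
    have hden : (0:ℝ) < g + β ^ 2 := by positivity
    rw [hval, hid β, le_div_iff₀ hden]
    nlinarith [mul_nonneg hk0.le (sq_nonneg (β - b))]
  · intro β hβeq
    have hden : (0:ℝ) < g + β ^ 2 := by positivity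
    rw [hval, hid β, div_eq_iff hden.ne'] at hβeq
    have h0 : k * (β - b) ^ 2 = 0 := by linear_combination hβeq
    have h0' : (β - b) ^ 2 = 0 := by
      rcases mul_eq_zero.mp h0 with hx | hx
      · exact absurd hx hk0.ne'
      · exact hx
    have := pow_eq_zero_iff (two_ne_zero) |>.mp h0'
    linarith [this]
  · rw [hb, one_div_div]

theorem stmt_19 (n : ℕ) (s y : Fin n → ℝ) (hsy : 0 < ∑ i, s i * y i)
    (γ : ℝ) (hγ : 0 < γ) :
    let c : ℝ := ∑ i, s i * y i
    let βBB : ℝ := ((∑ i, y i ^ 2) - (∑ i, s i ^ 2) / γ ^ 2 +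
      Real.sqrt (((∑ i, y i ^ 2) - (∑ i, s i ^ 2) / γ ^ 2) ^ 2 + 4 * c ^ 2 / γ ^ 2)) / (2 * c)
    let h : ℝ → ℝ := fun β => (∑ i, (β * s i - y i) ^ 2) / (1 / γ ^ 2 + β ^ 2)
    0 < βBB ∧
    (∀ β : ℝ, h βBB ≤ h β) ∧ (∀ β : ℝ, h β = h βBB → β = βBB) ∧
    (2 * c) / ((∑ i, y i ^ 2) - (∑ i, s i ^ 2) / γ ^ 2 +
      Real.sqrt (((∑ i, s i ^ 2) / γ ^ 2 - (∑ i, y i ^ 2)) ^ 2 + 4 * c ^ 2 / γ ^ 2))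
      = 1 / βBB := by
  intro c βBB h
  have hcdef : c = ∑ i, s i * y i := rfl
  have hc : 0 < c := hsy
  have hg : (0:ℝ) < 1 / γ ^ 2 := by positivity
  have hβdef : βBB = ((∑ i, y i ^ 2) - (∑ i, s i ^ 2) / γ ^ 2 +
      Real.sqrt (((∑ i, y i ^ 2) - (∑ i, s i ^ 2) / γ ^ 2) ^ 2 + 4 * c ^ 2 / γ ^ 2)) / (2 * c) :=
    rfl
  obtain ⟨hpos, hmin, huniq, hinv⟩ :=
    aux_stls (∑ i, s i ^ 2) (∑ i, y i ^ 2) c (1 / γ ^ 2)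
      (Real.sqrt (((∑ i, y i ^ 2) - (∑ i, s i ^ 2) / γ ^ 2) ^ 2 + 4 * c ^ 2 / γ ^ 2))
      βBB hc hg
      (by congr 1; ring)
      (by rw [hβdef]; ring_nf)
  have hexp : ∀ β : ℝ, h β = ((∑ i, s i ^ 2) * β ^ 2 - 2 * c * β + (∑ i, y i ^ 2))
      / (1 / γ ^ 2 + β ^ 2) := by
    intro β
    have h1 : ∀ i ∈ Finset.univ, (β * s i - y i) ^ 2
        = β ^ 2 * s i ^ 2 - 2 * β * (s i * y i) + y i ^ 2 := fun i _ => by ring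
    show (∑ i, (β * s i - y i) ^ 2) / (1 / γ ^ 2 + β ^ 2) = _
    rw [Finset.sum_congr rfl h1, Finset.sum_add_distrib, Finset.sum_sub_distrib,
      ← Finset.mul_sum, ← Finset.mul_sum, hcdef]
    ring_nf
  refine ⟨hpos, ?_, ?_, ?_⟩
  · intro β
    rw [hexp β, hexp βBB]
    exact hmin β
  · intro β hβeq
    rw [hexp β, hexp βBB] at hβeq
    exact huniq β hβeq
  · rw [show ((∑ i, s i ^ 2) / γ ^ 2 - (∑ i, y i ^ 2)) ^ 2 + 4 * c ^ 2 / γ ^ 2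
        = ((∑ i, y i ^ 2) - (∑ i, s i ^ 2) / γ ^ 2) ^ 2 + 4 * c ^ 2 / γ ^ 2 from by ring]
    rw [show (∑ i, s i ^ 2) * (1 / γ ^ 2) = (∑ i, s i ^ 2) / γ ^ 2 from by ring] at hinv
    exact hinv
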